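/- arXiv:2211.16545 — 2 statements merged into one kernel-verified Lean document; each statement's English description precedes it below -/
import Mathlib

section
/- The plank J is not realcompact: there do not exist an index set ι and a closed embedding of J into ℝ^ι (with the product topology). -/
open Set Topology

universe u

/-- A topological space is *realcompact* if it admits a closed embedding into a power
of the real line. -/
def Realcompact (X : Type u) [TopologicalSpace X] : Prop :=
  ∃ (ι : Type u) (f : X → ι → ℝ), Topology.IsClosedEmbedding f

/-- `ω₁`, the set of countable ordinals, as a type carrying the discrete topology. -/
def W1 : Type := (Cardinal.aleph 1).ord.ToType

instance : TopologicalSpace W1 := ⊥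
instance : DiscreteTopology W1 := ⟨rfl⟩

/-- The plank `J`: the product of the one-point compactifications of the discrete spaces
`ω₁` and `ℕ`, with the corner point `(∞₁, ∞₀)` removed. -/
abbrev J : Type := {p : OnePoint W1 × OnePoint ℕ // p ≠ (OnePoint.infty, OnePoint.infty)}

/-- The point `(α, n)` of `J`, for `α ∈ ω₁` and `n ∈ ℕ`. -/
def Jmk (α : W1) (n : ℕ) : J :=
  ⟨(↑α, ↑n), fun h => OnePoint.coe_ne_infty α (congrArg Prod.fst h)⟩

/-- The point `(α, ∞₀)` of the top line `T = ω₁ × {∞₀}` of `J`. -/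
def JmkTop (α : W1) : J :=
  ⟨(↑α, OnePoint.infty), fun h => OnePoint.coe_ne_infty α (congrArg Prod.fst h)⟩

/-- The point `(∞₁, n)` of the right-hand side `R = {∞₁} × ℕ` of `J`. -/
def JmkRight (n : ℕ) : J :=
  ⟨(OnePoint.infty, ↑n), fun h => OnePoint.coe_ne_infty n (congrArg Prod.snd h)⟩

open Filter

/-- A continuous map out of the one-point compactification of a discrete space tends to its
value at infinity along the cofinite filter. -/
lemma tendsto_cofinite_of_onePoint {X : Type*} [TopologicalSpace X] [DiscreteTopology X]
    {Y : Type*} [TopologicalSpace Y] {g : OnePoint X → Y} (hg : Continuous g) :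
    Tendsto (fun x : X => g x) cofinite (𝓝 (g OnePoint.infty)) := by
  have h1 : Tendsto (fun x : X => (x : OnePoint X)) cofinite (𝓝 (OnePoint.infty : OnePoint X)) := by
    have := OnePoint.tendsto_coe_infty (X := X)
    rwa [Filter.coclosedCompact_eq_cocompact, cocompact_eq_cofinite] at this
  exact (hg.tendsto _).comp h1

/-- A real-valued function tending to `L` along the cofinite filter differs from `L` only on a
countable set. -/
lemma countable_ne_of_tendsto_cofinite {X : Type*} {u : X → ℝ} {L : ℝ}
    (h : Tendsto u cofinite (𝓝 L)) : {x | u x ≠ L}.Countable := by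
  have hsub : {x | u x ≠ L} ⊆ ⋃ k : ℕ, {x | (1:ℝ)/(k+1) ≤ dist (u x) L} := by
    intro x hx
    have hd : 0 < dist (u x) L := dist_pos.2 hx
    obtain ⟨k, hk⟩ := exists_nat_one_div_lt hd
    exact mem_iUnion.2 ⟨k, le_of_lt hk⟩
  refine Set.Countable.mono hsub (Set.countable_iUnion fun k => Set.Finite.countable ?_)
  have hb : Metric.ball L ((1:ℝ)/(k+1)) ∈ 𝓝 L := Metric.ball_mem_nhds _ (by positivity)
  have h2 := h hb
  rw [Filter.mem_map, Filter.mem_cofinite] at h2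
  refine h2.subset fun x hx => ?_
  simp only [mem_compl_iff, mem_preimage, Metric.mem_ball, not_lt]
  exact hx

lemma W1_uncountable : ¬ (Set.univ : Set W1).Countable := by
  rw [Set.countable_univ_iff]
  intro hc
  have : (Cardinal.mk W1) ≤ Cardinal.aleph0 := Cardinal.mk_le_aleph0
  rw [show Cardinal.mk W1 = Cardinal.aleph 1 from Cardinal.mk_ord_toType _] at this
  exact absurd this (not_le.2 Cardinal.aleph0_lt_aleph_one)

lemma exists_not_mem_of_countable {A : Set W1} (hA : A.Countable) : ∃ α, α ∉ A := by
  by_contra h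
  push_neg at h
  exact W1_uncountable (hA.mono fun x _ => h x)

/-- The inclusion of a column `{α} × ℕ⁺` into `J` is continuous. -/
lemma continuous_col (α : W1) : Continuous (fun y : OnePoint ℕ => (⟨((α : OnePoint W1), y),
    fun h => OnePoint.coe_ne_infty α (congrArg Prod.fst h)⟩ : J)) :=
  Continuous.subtype_mk (continuous_const.prodMk continuous_id) _

/-- The inclusion of a row `ω₁⁺ × {n}` into `J` is continuous. -/
lemma continuous_row (n : ℕ) : Continuous (fun x : OnePoint W1 => (⟨(x, (n : OnePoint ℕ)),
    fun h => OnePoint.coe_ne_infty n (congrArg Prod.snd h)⟩ : J)) :=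
  Continuous.subtype_mk (continuous_id.prodMk continuous_const) _

/-- Key property of the plank: every continuous real function on `J` converges along the right
edge, and its values on the top line agree with that limit off a countable set. -/
lemma plank_key {h : J → ℝ} (hc : Continuous h) :
    ∃ c : ℝ, Tendsto (fun n => h (JmkRight n)) atTop (𝓝 c) ∧
      {α : W1 | h (JmkTop α) ≠ c}.Countable := by
  have hcol : ∀ α : W1, Tendsto (fun n : ℕ => h (Jmk α n)) atTop (𝓝 (h (JmkTop α))) := by
    intro α
    have := tendsto_cofinite_of_onePoint (hc.comp (continuous_col α))
    rw [Nat.cofinite_eq_atTop] at this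
    exact this
  have hrow : ∀ n : ℕ, {α : W1 | h (Jmk α n) ≠ h (JmkRight n)}.Countable := by
    intro n
    exact countable_ne_of_tendsto_cofinite
      (tendsto_cofinite_of_onePoint (hc.comp (continuous_row n)))
  set A : Set W1 := ⋃ n, {α : W1 | h (Jmk α n) ≠ h (JmkRight n)} with hAdef
  have hAc : A.Countable := Set.countable_iUnion hrow
  obtain ⟨α₀, hα₀⟩ := exists_not_mem_of_countable hAc
  have key : ∀ α, α ∉ A → Tendsto (fun n => h (JmkRight n)) atTop (𝓝 (h (JmkTop α))) := by
    intro α hα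
    refine (hcol α).congr fun n => ?_
    by_contra hne
    exact hα (mem_iUnion.2 ⟨n, hne⟩)
  refine ⟨h (JmkTop α₀), key α₀ hα₀, ?_⟩
  refine hAc.mono fun α hα => ?_
  by_contra hαA
  exact hα (tendsto_nhds_unique (key α hαA) (key α₀ hα₀))

/-- The right edge `R = {∞₁} × ℕ` is closed in `J`. -/
lemma isClosed_rangeRight : IsClosed (range JmkRight : Set J) := by
  have : (range JmkRight : Set J) = (fun x : J => x.val.1) ⁻¹' {OnePoint.infty} := by
    ext x
    constructor
    · rintro ⟨n, rfl⟩; rfl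
    · intro hx
      simp only [mem_preimage, mem_singleton_iff] at hx
      obtain ⟨⟨a, b⟩, hne⟩ := x
      simp only at hx
      subst hx
      cases b with
      | infty => exact absurd rfl hne
      | coe n => exact ⟨n, rfl⟩
  rw [this]
  exact OnePoint.isClosed_infty.preimage (continuous_fst.comp continuous_subtype_val)

/-- The top line `T = ω₁ × {∞₀}` is closed in `J`. -/
lemma isClosed_rangeTop : IsClosed (range JmkTop : Set J) := by
  have : (range JmkTop : Set J) = (fun x : J => x.val.2) ⁻¹' {OnePoint.infty} := by
    ext x
    constructor
    · rintro ⟨α, rfl⟩; rfl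
    · intro hx
      simp only [mem_preimage, mem_singleton_iff] at hx
      obtain ⟨⟨a, b⟩, hne⟩ := x
      simp only at hx
      subst hx
      cases a with
      | infty => exact absurd rfl hne
      | coe α => exact ⟨α, rfl⟩
  rw [this]
  exact OnePoint.isClosed_infty.preimage (continuous_snd.comp continuous_subtype_val)

/-- The plank `J` is not realcompact. -/
theorem statement6 : ¬ Realcompact J := by
  rintro ⟨ι, f, hf⟩
  have hcont : Continuous f := hf.continuous
  choose c hc1 hc2 using fun i => plank_key ((continuous_apply i).comp hcont)
  have htend : Tendsto (fun n => f (JmkRight n)) atTop (𝓝 c) := tendsto_pi_nhds.2 hc1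
  have hcR : c ∈ f '' range JmkRight := by
    have hclosed : IsClosed (f '' range JmkRight) := hf.isClosedMap _ isClosed_rangeRight
    exact hclosed.mem_of_tendsto htend (Filter.Eventually.of_forall fun n =>
      ⟨JmkRight n, mem_range_self n, rfl⟩)
  have hcT : c ∈ f '' range JmkTop := by
    have hclosed : IsClosed (f '' range JmkTop) := hf.isClosedMap _ isClosed_rangeTop
    rw [← hclosed.closure_eq]
    rw [mem_closure_iff_nhds]
    intro t ht
    rw [nhds_pi, Filter.mem_pi'] at ht
    obtain ⟨I, V, hV, hsub⟩ := ht
    have hbad : (⋃ i ∈ I, {α : W1 | f (JmkTop α) i ≠ c i}).Countable :=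
      Set.Countable.biUnion I.countable_toSet (fun i _ => hc2 i)
    obtain ⟨α, hα⟩ := exists_not_mem_of_countable hbad
    refine ⟨f (JmkTop α), hsub ?_, ⟨JmkTop α, mem_range_self _, rfl⟩⟩
    intro i hi
    have heq : f (JmkTop α) i = c i := by
      by_contra hne
      exact hα (mem_iUnion₂.2 ⟨i, hi, hne⟩)
    rw [heq]
    exact mem_of_mem_nhds (hV i)
  obtain ⟨x, ⟨n, rfl⟩, hx⟩ := hcR
  obtain ⟨y, ⟨α, rfl⟩, hy⟩ := hcT
  have heq : JmkRight n = JmkTop α := hf.injective (hx.trans hy.symm)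
  have : ((n : OnePoint ℕ)) = OnePoint.infty := congrArg (fun z : J => z.val.2) heq
  exact OnePoint.coe_ne_infty n this
end

section
/- The plank P is not realcompact: there do not exist an index set ι and a closed embedding of P into ℝ^ι (with the product topology). -/
open Set Topology

universe u

/-- The Stone–Čech compactification `βℕ` of the discrete space `ℕ`. -/
abbrev betaN : Type := StoneCech ℕ

/-- The Stone–Čech remainder `ℕ* = βℕ \ ℕ`. -/
def Nstar : Set betaN := (Set.range (stoneCechUnit : ℕ → betaN))ᶜ

/-- The plank `P`: the subspace `(ω₁⁺ × βℕ) \ ({∞₁} × ℕ*)` of `ω₁⁺ × βℕ`, where `ω₁⁺` is the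
one-point compactification of the discrete space `ω₁`. -/
abbrev P : Type :=
  {p : OnePoint W1 × betaN // ¬ (p.1 = OnePoint.infty ∧ p.2 ∈ Nstar)}

/-- The point `(∞₁, n)` of the right-hand side `R = {∞₁} × ℕ` of `P`. -/
def PmkR (n : ℕ) : P :=
  ⟨(OnePoint.infty, stoneCechUnit n), fun h => h.2 ⟨n, rfl⟩⟩


/-- Points of the plank with first coordinate in `ω₁`. -/
def Pmk (α : W1) (x : betaN) : P :=
  ⟨((α : OnePoint W1), x), fun h => OnePoint.coe_ne_infty α h.1⟩

lemma continuous_Pmk (α : W1) : Continuous fun x => Pmk α x :=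
  Continuous.subtype_mk (continuous_const.prodMk continuous_id) _

lemma W1_not_countable : ¬ Countable W1 := by
  intro h
  have h1 : (Cardinal.mk W1) ≤ Cardinal.aleph0 := Cardinal.mk_le_aleph0
  have h2 : Cardinal.mk W1 = Cardinal.aleph 1 := by
    rw [show W1 = (Cardinal.aleph 1).ord.ToType from rfl, Cardinal.mk_toType,
      Cardinal.card_ord]
  rw [h2] at h1
  exact absurd (lt_of_lt_of_le Cardinal.aleph0_lt_aleph_one h1) (lt_irrefl _)

lemma exists_not_mem_of_countable_s9 {S : Set W1} (hS : S.Countable) : ∃ α, α ∉ S := by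
  by_contra h
  push_neg at h
  have : (univ : Set W1).Countable := hS.mono fun α _ => h α
  exact W1_not_countable (countable_univ_iff.1 this)

lemma Nstar_nonempty : ∃ u, u ∈ Nstar := by
  by_contra h
  push_neg at h
  have hmem : ∀ x : betaN, x ∈ Set.range (stoneCechUnit : ℕ → betaN) := by
    intro x
    have := h x
    rwa [Nstar, mem_compl_iff, not_not] at this
  have hc : ∀ m : ℕ, Continuous (fun k : ℕ => decide (k = m)) :=
    fun m => continuous_of_discreteTopology
  set V : ℕ → Set betaN := fun m => stoneCechExtend (hc m) ⁻¹' ({true} : Set Bool) with hV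
  have hVo : ∀ m, IsOpen (V m) := fun m =>
    (isOpen_discrete _).preimage (continuous_stoneCechExtend _)
  have hcover : (univ : Set betaN) ⊆ ⋃ m, V m := by
    intro x _
    obtain ⟨k, rfl⟩ := hmem x
    refine mem_iUnion.2 ⟨k, ?_⟩
    simp only [hV, mem_preimage, mem_singleton_iff]
    rw [show stoneCechExtend (hc k) (stoneCechUnit k) = decide (k = k) from
      congrFun (stoneCechExtend_extends (hc k)) k]
    simp
  obtain ⟨t, ht⟩ := isCompact_univ.elim_finite_subcover V hVo hcover
  obtain ⟨k, hk⟩ := Infinite.exists_notMem_finset t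
  have := ht (mem_univ (stoneCechUnit k))
  rw [mem_iUnion₂] at this
  obtain ⟨m, hm, hmem'⟩ := this
  simp only [hV, mem_preimage, mem_singleton_iff] at hmem'
  rw [show stoneCechExtend (hc m) (stoneCechUnit k) = decide (k = m) from
    congrFun (stoneCechExtend_extends (hc m)) k] at hmem'
  simp only [decide_eq_true_eq] at hmem'
  exact hk (hmem' ▸ hm)

/-- The key lemma: a continuous real function on the plank is constant off a countable set of
columns, when evaluated at a fixed point `u` of the remainder. -/
lemma key (g : P → ℝ) (hg : Continuous g) {u : betaN} (hu : u ∈ Nstar) :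
    ∃ (c : ℝ) (S : Set W1), S.Countable ∧ ∀ α ∉ S, g (Pmk α u) = c := by
  set t : ℕ → ℝ := fun n => g (PmkR n) with htdef
  -- finiteness of bad columns at precision ε
  have hbad : ∀ (n : ℕ) (ε : ℝ), 0 < ε →
      {α : W1 | ε ≤ |g (Pmk α (stoneCechUnit n)) - t n|}.Finite := by
    intro n ε hε
    have hN : g ⁻¹' Metric.ball (t n) ε ∈ 𝓝 (PmkR n) :=
      hg.continuousAt.preimage_mem_nhds (Metric.ball_mem_nhds _ hε)
    rw [nhds_subtype_eq_comap, Filter.mem_comap] at hN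
    obtain ⟨O, hO, hON⟩ := hN
    rw [mem_nhds_prod_iff] at hO
    obtain ⟨U, hU, V, hV, hUV⟩ := hO
    obtain ⟨U', hU'sub, hU'open, hU'mem⟩ := mem_nhds_iff.1 hU
    have hfin : (((↑) : W1 → OnePoint W1) ⁻¹' U')ᶜ.Finite :=
      isCompact_iff_finite.1 ((OnePoint.isOpen_iff_of_mem hU'mem).1 hU'open).2
    refine hfin.subset fun α hα => ?_
    rw [mem_compl_iff, mem_preimage]
    intro hmem
    have : (Pmk α (stoneCechUnit n)).val ∈ O :=
      hUV ⟨hU'sub hmem, mem_of_mem_nhds hV⟩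
    have hball := hON this
    simp only [mem_preimage, Metric.mem_ball, Real.dist_eq] at hball
    exact absurd hball (not_lt.2 hα)
  -- the countable set of bad columns
  set S : Set W1 := ⋃ n : ℕ, {α : W1 | g (Pmk α (stoneCechUnit n)) ≠ t n} with hSdef
  have hScount : S.Countable := by
    refine countable_iUnion fun n => ?_
    have hsub : {α : W1 | g (Pmk α (stoneCechUnit n)) ≠ t n} ⊆
        ⋃ k : ℕ, {α : W1 | 1 / (k + 1 : ℝ) ≤ |g (Pmk α (stoneCechUnit n)) - t n|} := by
      intro α hα
      have hd : 0 < |g (Pmk α (stoneCechUnit n)) - t n| :=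
        abs_pos.2 (sub_ne_zero.2 hα)
      obtain ⟨k, hk⟩ := exists_nat_one_div_lt hd
      exact mem_iUnion.2 ⟨k, le_of_lt hk⟩
    exact (Set.Countable.mono hsub
      (countable_iUnion fun k => (hbad n _ (by positivity)).countable))
  -- columns off S agree on ℕ, hence everywhere
  obtain ⟨α₀, hα₀⟩ := exists_not_mem_of_countable_s9 hScount
  refine ⟨g (Pmk α₀ u), S, hScount, fun α hα => ?_⟩
  have hagree : (fun x => g (Pmk α x)) = fun x => g (Pmk α₀ x) := by
    refine Continuous.ext_on denseRange_stoneCechUnit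
      (hg.comp (continuous_Pmk α)) (hg.comp (continuous_Pmk α₀)) ?_
    rintro _ ⟨m, rfl⟩
    have h1 : g (Pmk α (stoneCechUnit m)) = t m := by
      by_contra hne
      exact hα (mem_iUnion.2 ⟨m, hne⟩)
    have h2 : g (Pmk α₀ (stoneCechUnit m)) = t m := by
      by_contra hne
      exact hα₀ (mem_iUnion.2 ⟨m, hne⟩)
    exact h1.trans h2.symm
  exact congrFun hagree u

/-- The plank `P` is not realcompact. -/
theorem statement9 : ¬ Realcompact P := by
  classical
  rintro ⟨ι, f, hf⟩
  obtain ⟨u, hu⟩ := Nstar_nonempty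
  choose c S hSc hc using fun i : ι =>
    key (fun q => f q i) ((continuous_apply i).comp hf.continuous) hu
  -- the candidate limit point
  have hy : c ∈ closure (Set.range f) := by
    rw [mem_closure_iff]
    intro O hO hyO
    obtain ⟨I, usets, husets, hsub⟩ := isOpen_pi_iff.1 hO c hyO
    have hcnt : (⋃ i ∈ I, S i).Countable :=
      (I.countable_toSet).biUnion fun i _ => hSc i
    obtain ⟨α, hα⟩ := exists_not_mem_of_countable_s9 hcnt
    refine ⟨f (Pmk α u), hsub fun i hi => ?_, mem_range_self _⟩
    rw [hc i α fun h => hα (mem_biUnion hi h)]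
    exact (husets i hi).2
  obtain ⟨p, hp⟩ := hf.isClosed_range.closure_subset hy
  -- construct the separating function g
  have hgex : ∃ g : P → ℝ, Continuous g ∧ g p = 1 ∧
      ∃ Sg : Set W1, Sg.Countable ∧ ∀ α ∉ Sg, g (Pmk α u) = 0 := by
    by_cases hcase : p.val.1 = OnePoint.infty
    · -- p = (∞, stoneCechUnit n)
      have hp2 : p.val.2 ∈ Set.range (stoneCechUnit : ℕ → betaN) := by
        have := p.2
        by_contra hmem
        exact this ⟨hcase, hmem⟩
      obtain ⟨n, hn⟩ := hp2
      have hχ : Continuous (fun k : ℕ => decide (k = n)) := continuous_of_discreteTopology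
      set χ : betaN → Bool := stoneCechExtend hχ with hχdef
      have hχu : χ u = false := by
        have hcl : IsClosed (χ ⁻¹' ({false} : Set Bool)) :=
          (isClosed_discrete _).preimage (continuous_stoneCechExtend _)
        have hsub : closure (stoneCechUnit '' ({n}ᶜ : Set ℕ)) ⊆ χ ⁻¹' ({false} : Set Bool) := by
          rw [hcl.closure_subset_iff]
          rintro _ ⟨m, hm, rfl⟩
          show χ (stoneCechUnit m) ∈ ({false} : Set Bool)
          rw [show χ (stoneCechUnit m) = decide (m = n) from congrFun (stoneCechExtend_extends hχ) m]
          simpa using hm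
        have huin : u ∈ closure (stoneCechUnit '' ({n}ᶜ : Set ℕ)) := by
          have hsplit : (univ : Set betaN) =
              closure (stoneCechUnit '' ({n} : Set ℕ)) ∪
              closure (stoneCechUnit '' ({n}ᶜ : Set ℕ)) := by
            rw [← closure_union, ← image_union, union_compl_self, image_univ,
              denseRange_stoneCechUnit.closure_range]
          have := (hsplit ▸ mem_univ u)
          rcases this with h1 | h2
          · rw [image_singleton, closure_singleton] at h1
            exact absurd h1 (fun h => hu ⟨n, h.symm⟩)
          · exact h2
        exact hsub huin
      refine ⟨fun q => if χ q.val.2 = true then 1 else 0, ?_, ?_, ∅, countable_empty, ?_⟩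
      · have : Continuous fun q : P => χ q.val.2 :=
          (continuous_stoneCechExtend _).comp (continuous_snd.comp continuous_subtype_val)
        exact (continuous_of_discreteTopology (α := Bool)
          (f := fun b => if b = true then (1:ℝ) else 0)).comp this
      · have : χ p.val.2 = true := by
          rw [← hn, show χ (stoneCechUnit n) = decide (n = n) from
            congrFun (stoneCechExtend_extends hχ) n]
          simp
        simp [this]
      · intro α _
        show (if χ (Pmk α u).val.2 = true then (1:ℝ) else 0) = 0
        have : (Pmk α u).val.2 = u := rfl
        rw [this, hχu]
        simp
    · -- p = (β, x) with β ∈ ω₁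
      obtain ⟨β, hβ⟩ : ∃ β : W1, p.val.1 = (β : OnePoint W1) := by
        rcases hx : p.val.1 with _ | β
        · exact absurd hx hcase
        · exact ⟨β, rfl⟩
      have hclopen : IsClopen ({(β : OnePoint W1)} : Set (OnePoint W1)) := by
        constructor
        · exact isClosed_singleton
        · rw [OnePoint.isOpen_iff_of_notMem
            (fun h => OnePoint.coe_ne_infty β h.symm)]
          exact isOpen_discrete _
      have hclopen' : IsClopen {q : P | q.val.1 = (β : OnePoint W1)} := by
        have : {q : P | q.val.1 = (β : OnePoint W1)} =
            (fun q : P => q.val.1) ⁻¹' {(β : OnePoint W1)} := rfl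
        rw [this]
        exact hclopen.preimage (continuous_fst.comp continuous_subtype_val)
      refine ⟨fun q => if q.val.1 = (β : OnePoint W1) then 1 else 0, ?_, ?_, {β},
        countable_singleton β, ?_⟩
      · refine Continuous.if ?_ continuous_const continuous_const
        intro a ha
        rw [hclopen'.frontier_eq] at ha
        exact absurd ha (notMem_empty a)
      · simp [hβ]
      · intro α hα
        have hne : (Pmk α u).val.1 ≠ (β : OnePoint W1) := by
          intro h
          exact hα (mem_singleton_iff.2 (OnePoint.coe_eq_coe.1 h))
        simp [hne]
  obtain ⟨g, hgc, hgp, Sg, hSgc, hg0⟩ := hgex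
  set h : P → (ι → ℝ) × ℝ := fun q => (f q, g q) with hhdef
  have hrange : IsClosed (Set.range h) := by
    have hgr : IsClosed {q : P × ℝ | q.2 = g q.1} :=
      isClosed_eq continuous_snd (hgc.comp continuous_fst)
    have himg : Set.range h = (Prod.map f id) '' {q : P × ℝ | q.2 = g q.1} := by
      ext z
      constructor
      · rintro ⟨q, rfl⟩
        exact ⟨(q, g q), rfl, rfl⟩
      · rintro ⟨⟨q, r⟩, hq, rfl⟩
        exact ⟨q, by simp only [hhdef, Prod.map, id]; rw [← hq]⟩
    rw [himg]
    exact hf.isProperMap.universally_closed ℝ _ hgr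
  have hy2 : ((c, 0) : (ι → ℝ) × ℝ) ∈ closure (Set.range h) := by
    rw [mem_closure_iff]
    intro O hO hmem
    obtain ⟨U, V, hUo, hVo, hcU, h0V, hUVsub⟩ := isOpen_prod_iff.1 hO c 0 hmem
    obtain ⟨I, usets, husets, hsub⟩ := isOpen_pi_iff.1 hUo c hcU
    have hcnt : ((⋃ i ∈ I, S i) ∪ Sg).Countable :=
      ((I.countable_toSet).biUnion fun i _ => hSc i).union hSgc
    obtain ⟨α, hα⟩ := exists_not_mem_of_countable_s9 hcnt
    refine ⟨h (Pmk α u), hUVsub ⟨?_, ?_⟩, mem_range_self _⟩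
    · refine hsub fun i hi => ?_
      show f (Pmk α u) i ∈ usets i
      rw [hc i α fun hmem' => hα (mem_union_left _ (mem_biUnion hi hmem'))]
      exact (husets i hi).2
    · show g (Pmk α u) ∈ V
      rw [hg0 α fun hmem' => hα (mem_union_right _ hmem')]
      exact h0V
  obtain ⟨q, hq⟩ := hrange.closure_subset hy2
  have h1 : f q = c := congrArg Prod.fst hq
  have h2 : g q = 0 := congrArg Prod.snd hq
  have hqp : q = p := hf.injective (h1.trans hp.symm)
  rw [hqp, hgp] at h2
  exact one_ne_zero h2
end
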